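/- Under Assumptions 1, 2 and 3(b), the functional G is locally strongly convex around Γ_m, uniformly in the location parameter near m: there exists ε > 0 such that for every positive constant A there is a positive constant c_A such that for all V ∈ S(H) with ‖V − Γ_m‖_F ≤ A and all h ∈ ℝ^d with ‖h − m‖ ≤ ε, ⟨∇G_h(V) − ∇G_h(Γ_m), V − Γ_m⟩_F ≥ c_A ‖V − Γ_m‖_F². -/

import Mathlib

open MeasureTheory ProbabilityTheory Filter
open scoped ENNReal NNReal RealInnerProductSpace BigOperators

noncomputable section

/-- The space `S(H)` of `d × d` real matrices, viewed as a Euclidean space, so that its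
norm is the Frobenius norm and its inner product `⟪A, B⟫ = ∑ i j, A i j * B i j = tr (Aᵀ B)`
is the Frobenius inner product. -/
abbrev Mat (d : ℕ) := EuclideanSpace ℝ (Fin d × Fin d)

/-- `Y(h) = (x − h)(x − h)ᵀ`. -/
def Ymat {d : ℕ} (x h : EuclideanSpace ℝ (Fin d)) : Mat d :=
  (WithLp.equiv 2 _).symm (fun p => (x p.1 - h p.1) * (x p.2 - h p.2))

variable {d : ℕ} {Ω : Type*} [MeasurableSpace Ω]

/-- `G_h(V) = E[‖Y(h) − V‖_F − ‖Y(h)‖_F]`. -/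
def Gfun (P : Measure Ω) (X : Ω → EuclideanSpace ℝ (Fin d))
    (h : EuclideanSpace ℝ (Fin d)) (V : Mat d) : ℝ :=
  ∫ ω, (‖Ymat (X ω) h - V‖ - ‖Ymat (X ω) h‖) ∂P

/-- The gradient `∇G_h(V) = −E[(Y(h) − V)/‖Y(h) − V‖_F]`. -/
def gradG (P : Measure Ω) (X : Ω → EuclideanSpace ℝ (Fin d))
    (h : EuclideanSpace ℝ (Fin d)) (V : Mat d) : Mat d :=
  - ∫ ω, ‖Ymat (X ω) h - V‖⁻¹ • (Ymat (X ω) h - V) ∂P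

/-- The Hessian operator
`∇²G_h(V)(A) = E[(1/‖Y(h) − V‖_F)(A − ⟪Y(h) − V, A⟫_F (Y(h) − V)/‖Y(h) − V‖_F²)]`. -/
def hessG (P : Measure Ω) (X : Ω → EuclideanSpace ℝ (Fin d))
    (h : EuclideanSpace ℝ (Fin d)) (V : Mat d) (A : Mat d) : Mat d :=
  ∫ ω, ‖Ymat (X ω) h - V‖⁻¹ •
    (A - (‖Ymat (X ω) h - V‖ ^ 2)⁻¹ • (⟪Ymat (X ω) h - V, A⟫ • (Ymat (X ω) h - V))) ∂P

section AuxP1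
variable {F : Type*} [NormedAddCommGroup F] [InnerProductSpace ℝ F]




/-- The integrand of the Hessian quadratic form. -/
def Qc (c w : F) : ℝ := (‖c‖ ^ 2 - ⟪c, w⟫ ^ 2) / ‖c‖ ^ 3

lemma Qc_nonneg {c w : F} (hw : ‖w‖ = 1) : 0 ≤ Qc c w := by
  apply div_nonneg _ (by positivity)
  have h := abs_real_inner_le_norm c w
  rw [hw, mul_one] at h
  nlinarith [abs_nonneg ⟪c, w⟫, sq_abs ⟪c, w⟫]

lemma Qc_le_inv_norm (c w : F) : Qc c w ≤ ‖c‖⁻¹ := by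
  rcases eq_or_ne c 0 with rfl | hc
  · simp [Qc]
  · have hc' : (0:ℝ) < ‖c‖ := norm_pos_iff.2 hc
    rw [Qc, div_le_iff₀ (by positivity)]
    have : ‖c‖⁻¹ * ‖c‖ ^ 3 = ‖c‖ ^ 2 := by field_simp
    rw [this]
    nlinarith [sq_nonneg ⟪c, w⟫]

lemma hasDerivAt_norm_line {b w : F} {s : ℝ} (hc : b - s • w ≠ 0) :
    HasDerivAt (fun t : ℝ => ‖b - t • w‖) (-⟪b - s • w, w⟫ / ‖b - s • w‖) s := by
  have hcn : (0:ℝ) < ‖b - s • w‖ := norm_pos_iff.2 hc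
  have h1 : HasDerivAt (fun t : ℝ => b - t • w) (-w) s := by
    simpa using ((hasDerivAt_id s).smul_const w).const_sub b
  have h2 : HasDerivAt (fun t : ℝ => ⟪b - t • w, b - t • w⟫)
      (⟪b - s • w, -w⟫ + ⟪-w, b - s • w⟫) s := h1.inner ℝ h1
  have h2' : HasDerivAt (fun t : ℝ => ⟪b - t • w, b - t • w⟫)
      (-2 * ⟪b - s • w, w⟫) s := by
    convert h2 using 1
    rw [inner_neg_left, inner_neg_right, real_inner_comm w (b - s • w)]
    ring
  have hpos : ⟪b - s • w, b - s • w⟫ ≠ 0 := by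
    rw [real_inner_self_eq_norm_sq]; positivity
  have h3 := (Real.hasDerivAt_sqrt hpos).comp s h2'
  have hs : ∀ t : ℝ, ‖b - t • w‖ = Real.sqrt ⟪b - t • w, b - t • w⟫ := by
    intro t; rw [real_inner_self_eq_norm_sq, Real.sqrt_sq (norm_nonneg _)]
  have : HasDerivAt (fun t : ℝ => ‖b - t • w‖)
      (1 / (2 * Real.sqrt ⟪b - s • w, b - s • w⟫) * (-2 * ⟪b - s • w, w⟫)) s := by
    have hfun : (fun t : ℝ => ‖b - t • w‖) = Real.sqrt ∘ (fun t : ℝ => ⟪b - t • w, b - t • w⟫) := by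
      funext t; exact hs t
    rw [hfun]; exact h3
  convert this using 1
  rw [real_inner_self_eq_norm_sq, Real.sqrt_sq (norm_nonneg _)]
  field_simp

/-- Derivative of `ψ(t) = -⟪b - t•w, w⟫ / ‖b - t•w‖`. -/
lemma hasDerivAt_psi {b w : F} (hw : ‖w‖ = 1) {s : ℝ} (hc : b - s • w ≠ 0) :
    HasDerivAt (fun t : ℝ => -⟪b - t • w, w⟫ / ‖b - t • w‖) (Qc (b - s • w) w) s := by
  have hcn : (0:ℝ) < ‖b - s • w‖ := norm_pos_iff.2 hc
  have h1 : HasDerivAt (fun t : ℝ => b - t • w) (-w) s := by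
    simpa using ((hasDerivAt_id s).smul_const w).const_sub b
  have hnum : HasDerivAt (fun t : ℝ => -⟪b - t • w, w⟫) (‖w‖ ^ 2) s := by
    have := (h1.inner ℝ (hasDerivAt_const s w))
    simp only [inner_zero_right, zero_add] at this
    have h2 : HasDerivAt (fun t : ℝ => ⟪b - t • w, w⟫) (⟪-w, w⟫) s := by
      simpa using this
    have := h2.neg
    rw [inner_neg_left, neg_neg, real_inner_self_eq_norm_sq] at this
    exact this
  have hden := hasDerivAt_norm_line (s := s) hc
  have := hnum.div hden (ne_of_gt hcn)
  refine this.congr_deriv ?_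
  rw [hw, Qc]
  field_simp

/-- Key pointwise FTC identity. -/
lemma ftc_key {b w : F} (hw : ‖w‖ = 1) {r : ℝ} (hr : 0 ≤ r)
    (hb : ∀ s ∈ Set.Icc (0:ℝ) r, b - s • w ≠ 0) :
    ⟪b, w⟫ / ‖b‖ - ⟪b - r • w, w⟫ / ‖b - r • w‖
      = ∫ s in (0:ℝ)..r, Qc (b - s • w) w := by
  have huIcc : Set.uIcc (0:ℝ) r = Set.Icc 0 r := Set.uIcc_of_le hr
  have hderiv : ∀ s ∈ Set.uIcc (0:ℝ) r,
      HasDerivAt (fun t : ℝ => -⟪b - t • w, w⟫ / ‖b - t • w‖) (Qc (b - s • w) w) s := by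
    intro s hs; exact hasDerivAt_psi hw (hb s (huIcc ▸ hs))
  have hcont : ContinuousOn (fun s : ℝ => Qc (b - s • w) w) (Set.uIcc (0:ℝ) r) := by
    intro s hs
    have hc := hb s (huIcc ▸ hs)
    have hcn : (0:ℝ) < ‖b - s • w‖ := norm_pos_iff.2 hc
    have h1 : ContinuousAt (fun s : ℝ => b - s • w) s := by fun_prop
    apply ContinuousAt.continuousWithinAt
    apply ContinuousAt.div
    · exact ((h1.norm.pow 2).sub ((h1.inner continuousAt_const).pow 2))
    · exact h1.norm.pow 3
    · positivity
  have hint : IntervalIntegrable (fun s : ℝ => Qc (b - s • w) w) volume 0 r :=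
    hcont.intervalIntegrable
  have := intervalIntegral.integral_eq_sub_of_hasDerivAt hderiv hint
  rw [this]
  simp only [zero_smul, sub_zero]
  ring

end AuxP1

/-- Markov-type bound from Assumption 3(b). -/
lemma markov_ball {P : Measure Ω} (Y : Ω → Mat d) (hY : Measurable Y) {C : ℝ}
    (hC : 0 < C) {v : Mat d}
    (h2 : (∫⁻ ω, ((‖Y ω - v‖₊ : ℝ≥0∞) ^ 2)⁻¹ ∂P) ≤ ENNReal.ofReal C)
    {s : ℝ} (hs : 0 < s) :
    P {ω | ‖Y ω - v‖ ≤ s} ≤ ENNReal.ofReal (C * s ^ 2) := by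
  set g : Ω → ℝ≥0∞ := fun ω => ((‖Y ω - v‖₊ : ℝ≥0∞) ^ 2)⁻¹ with hg
  have hmeas : AEMeasurable g P := by
    apply Measurable.aemeasurable
    apply Measurable.inv
    apply Measurable.pow_const
    exact (measurable_coe_nnreal_ennreal.comp ((hY.sub measurable_const).nnnorm))
  have hsub : {ω | ‖Y ω - v‖ ≤ s} ⊆ {ω | (ENNReal.ofReal (s ^ 2))⁻¹ ≤ g ω} := by
    intro ω hω
    simp only [Set.mem_setOf_eq] at hω ⊢
    apply ENNReal.inv_le_inv.2
    calc ((‖Y ω - v‖₊ : ℝ≥0∞) ^ 2) ≤ (ENNReal.ofReal s) ^ 2 := by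
          apply pow_le_pow_left₀
          · simp
          · rw [← ENNReal.ofReal_coe_nnreal, coe_nnnorm]
            exact ENNReal.ofReal_le_ofReal hω
      _ = ENNReal.ofReal (s ^ 2) := by
          rw [ENNReal.ofReal_pow hs.le]
  have hmarkov := mul_meas_ge_le_lintegral₀ hmeas ((ENNReal.ofReal (s ^ 2))⁻¹)
  have hmono : P {ω | ‖Y ω - v‖ ≤ s} ≤ P {ω | (ENNReal.ofReal (s ^ 2))⁻¹ ≤ g ω} := measure_mono hsub
  have hs2 : ENNReal.ofReal (s ^ 2) ≠ 0 := by
    simp [ENNReal.ofReal_eq_zero]; positivity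
  have hs2' : ENNReal.ofReal (s ^ 2) ≠ ⊤ := ENNReal.ofReal_ne_top
  have key : (ENNReal.ofReal (s ^ 2))⁻¹ * P {ω | ‖Y ω - v‖ ≤ s} ≤ ENNReal.ofReal C := by
    calc (ENNReal.ofReal (s ^ 2))⁻¹ * P {ω | ‖Y ω - v‖ ≤ s}
        ≤ (ENNReal.ofReal (s ^ 2))⁻¹ * P {ω | (ENNReal.ofReal (s ^ 2))⁻¹ ≤ g ω} := by
          exact mul_le_mul_right hmono _
      _ ≤ ∫⁻ ω, g ω ∂P := hmarkov
      _ ≤ ENNReal.ofReal C := h2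
  have := mul_le_mul_right key (ENNReal.ofReal (s ^ 2))
  rw [← mul_assoc, ENNReal.mul_inv_cancel hs2 hs2', one_mul] at this
  calc P {ω | ‖Y ω - v‖ ≤ s} ≤ ENNReal.ofReal (s ^ 2) * ENNReal.ofReal C := this
    _ = ENNReal.ofReal (C * s ^ 2) := by
        rw [← ENNReal.ofReal_mul (by positivity)]; ring_nf

/-- A random matrix satisfying the inverse-square moment bound puts no mass on any line. -/
lemma line_null {P : Measure Ω} [IsProbabilityMeasure P] (Y : Ω → Mat d) (hY : Measurable Y)
    {C : ℝ} (hC : 0 < C)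
    (h2 : ∀ v : Mat d, (∫⁻ ω, ((‖Y ω - v‖₊ : ℝ≥0∞) ^ 2)⁻¹ ∂P) ≤ ENNReal.ofReal C)
    (V w : Mat d) (hw : ‖w‖ = 1) :
    P {ω | ∃ t : ℝ, Y ω = V + t • w} = 0 := by
  classical
  set T : Ω → ℝ := fun ω => ⟪Y ω - V, w⟫ with hT
  have hTmeas : Measurable T := by
    have : Continuous fun y : Mat d => ⟪y - V, w⟫ :=
      (continuous_id.sub continuous_const).inner continuous_const
    exact this.measurable.comp hY
  have hSrw : {ω | ∃ t : ℝ, Y ω = V + t • w} = {ω | (Y ω - V) - T ω • w = 0} := by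
    ext ω
    simp only [Set.mem_setOf_eq]
    constructor
    · rintro ⟨t, ht⟩
      have hYV : Y ω - V = t • w := by rw [ht]; abel
      have : T ω = t := by
        rw [hT]; simp only [hYV, real_inner_smul_left]
        rw [real_inner_self_eq_norm_sq, hw]; ring
      rw [hYV, this]; abel
    · intro h0
      exact ⟨T ω, by rw [← sub_eq_zero]; rw [← h0]; abel⟩
  rw [hSrw]
  set S : Set Ω := {ω | (Y ω - V) - T ω • w = 0} with hS
  have hSmeas : MeasurableSet S := by
    have : Measurable fun ω => (Y ω - V) - T ω • w := by
      exact ((hY.sub measurable_const).sub (hTmeas.smul measurable_const))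
    exact this (measurableSet_singleton 0)
  by_contra h0
  have hYS : ∀ ω ∈ S, Y ω = V + T ω • w := by
    intro ω hω
    have : (Y ω - V) - T ω • w = 0 := hω
    rw [← sub_eq_zero]; rw [← this]; abel
  -- truncate T
  set Sn : ℕ → Set Ω := fun n => S ∩ {ω | |T ω| ≤ n} with hSn
  have hSnmeas : ∀ n, MeasurableSet (Sn n) := fun n =>
    hSmeas.inter ((hTmeas.abs) measurableSet_Iic)
  have hSU : S = ⋃ n, Sn n := by
    ext ω; constructor
    · intro hω
      obtain ⟨n, hn⟩ := exists_nat_ge (|T ω|)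
      exact Set.mem_iUnion.2 ⟨n, hω, hn⟩
    · rintro hω
      obtain ⟨n, hn, _⟩ := Set.mem_iUnion.1 hω
      exact hn
  have hdir : Directed (fun x1 x2 : Set Ω => x1 ⊆ x2) Sn := by
    apply Monotone.directed_le
    intro a b hab ω ⟨h1, h2⟩
    exact ⟨h1, le_trans h2 (Nat.cast_le.mpr hab : (a:ℝ) ≤ (b:ℝ))⟩
  have hiSup : P S = ⨆ n, P (Sn n) := by rw [hSU]; exact Directed.measure_iUnion hdir
  have hex : ∃ n, 0 < P (Sn n) := by
    by_contra hno
    push_neg at hno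
    apply h0
    rw [hiSup]
    simp only [nonpos_iff_eq_zero] at hno
    simp [hno]
  obtain ⟨n, hn⟩ := hex
  set p : ℝ≥0∞ := P (Sn n) with hp
  have hpfin : p ≠ ⊤ := by
    exact ne_top_of_le_ne_top (measure_ne_top P _) le_rfl
  have hptoReal : 0 < p.toReal := ENNReal.toReal_pos hn.ne' hpfin
  -- choose δ
  set δ : ℝ := min 1 (p.toReal / (8 * C * (n + 2))) with hδ
  have hδpos : 0 < δ := by
    apply lt_min one_pos
    positivity
  have hδ1 : δ ≤ 1 := min_le_left _ _
  set K : ℕ := ⌈(n : ℝ) / δ⌉₊ with hK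
  set tk : ℕ → ℝ := fun k => -(n : ℝ) + 2 * k * δ with htk
  -- covering
  have hcover : Sn n ⊆ ⋃ k ∈ Finset.range (K + 1),
      {ω | ‖Y ω - (V + tk k • w)‖ ≤ 2 * δ} := by
    rintro ω ⟨hωS, hωT⟩
    have hTn : |T ω| ≤ (n : ℝ) := hωT
    have hTlb : 0 ≤ T ω + n := by
      have := abs_le.1 hTn; linarith [this.1]
    have hTub : T ω + n ≤ 2 * n := by
      have := abs_le.1 hTn; linarith [this.2]
    set k : ℕ := ⌊(T ω + n) / (2 * δ)⌋₊ with hk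
    have hkK : k ≤ K := by
      have h1 : (k : ℝ) ≤ (T ω + n) / (2 * δ) := Nat.floor_le (by positivity)
      have h2 : (T ω + n) / (2 * δ) ≤ (n : ℝ) / δ := by
        rw [div_le_div_iff₀ (by positivity) hδpos]
        ring_nf
        nlinarith
      have h3 : ((n : ℝ) / δ) ≤ (K : ℝ) := Nat.le_ceil _
      exact_mod_cast Nat.cast_le.1 (le_trans h1 (le_trans h2 h3))
    apply Set.mem_biUnion (Finset.mem_range.2 (Nat.lt_succ_of_le hkK))
    have hYω : Y ω = V + T ω • w := hYS ω hωS
    have hnorm : ‖Y ω - (V + tk k • w)‖ = |T ω - tk k| := by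
      rw [hYω]
      have : V + T ω • w - (V + tk k • w) = (T ω - tk k) • w := by
        rw [sub_smul]; abel
      rw [this, norm_smul, hw, mul_one, Real.norm_eq_abs]
    have hfl1 : 2 * k * δ ≤ T ω + n := by
      have := Nat.floor_le (show (0:ℝ) ≤ (T ω + n) / (2 * δ) by positivity)
      rw [← hk] at this
      calc 2 * (k:ℝ) * δ = ((k:ℝ)) * (2 * δ) := by ring
        _ ≤ ((T ω + n) / (2 * δ)) * (2 * δ) := by
            apply mul_le_mul_of_nonneg_right this (by positivity)
        _ = T ω + n := by field_simp
    have hfl2 : T ω + n < 2 * (k + 1) * δ := by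
      have := Nat.lt_floor_add_one ((T ω + n) / (2 * δ))
      rw [← hk] at this
      have h2δ : (0:ℝ) < 2 * δ := by positivity
      calc T ω + n = ((T ω + n) / (2 * δ)) * (2 * δ) := by field_simp
        _ < ((k:ℝ) + 1) * (2 * δ) := by
            apply mul_lt_mul_of_pos_right this h2δ
        _ = 2 * ((k:ℝ) + 1) * δ := by ring
    show ‖Y ω - (V + tk k • w)‖ ≤ 2 * δ
    rw [hnorm, htk]
    rw [abs_le]
    constructor
    · simp only []
      nlinarith
    · simp only []
      nlinarith
  -- measure bound
  have hsum : P (Sn n) ≤ ∑ k ∈ Finset.range (K + 1),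
      P {ω | ‖Y ω - (V + tk k • w)‖ ≤ 2 * δ} :=
    le_trans (measure_mono hcover) (measure_biUnion_finset_le _ _)
  have hterm : ∀ k ∈ Finset.range (K + 1),
      P {ω | ‖Y ω - (V + tk k • w)‖ ≤ 2 * δ} ≤ ENNReal.ofReal (C * (2 * δ) ^ 2) := by
    intro k _
    exact markov_ball Y hY hC (h2 (V + tk k • w)) (by positivity)
  have hsum2 : P (Sn n) ≤ (K + 1) * ENNReal.ofReal (C * (2 * δ) ^ 2) := by
    calc P (Sn n) ≤ ∑ k ∈ Finset.range (K + 1),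
        P {ω | ‖Y ω - (V + tk k • w)‖ ≤ 2 * δ} := hsum
      _ ≤ ∑ _k ∈ Finset.range (K + 1), ENNReal.ofReal (C * (2 * δ) ^ 2) :=
          Finset.sum_le_sum hterm
      _ = (K + 1) * ENNReal.ofReal (C * (2 * δ) ^ 2) := by
          rw [Finset.sum_const, Finset.card_range, nsmul_eq_mul]; norm_cast
  have hreal : ((K:ℝ) + 1) * (C * (2 * δ) ^ 2) < p.toReal := by
    have hKlt : (K : ℝ) < (n : ℝ) / δ + 1 := Nat.ceil_lt_add_one (by positivity)
    have hKδ : ((K:ℝ) + 1) * δ < (n : ℝ) + 2 := by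
      have : ((K:ℝ) + 1) * δ < ((n : ℝ) / δ + 2) * δ := by
        apply mul_lt_mul_of_pos_right (by linarith) hδpos
      calc ((K:ℝ) + 1) * δ < ((n : ℝ) / δ + 2) * δ := this
        _ = (n : ℝ) + 2 * δ := by field_simp
        _ ≤ (n : ℝ) + 2 := by linarith
    have hδbound : δ ≤ p.toReal / (8 * C * (n + 2)) := min_le_right _ _
    have h8 : (0:ℝ) < 8 * C * ((n:ℝ) + 2) := by positivity
    calc ((K:ℝ) + 1) * (C * (2 * δ) ^ 2) = (((K:ℝ) + 1) * δ) * (4 * C * δ) := by ring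
      _ ≤ ((n:ℝ) + 2) * (4 * C * δ) := by
          apply mul_le_mul_of_nonneg_right hKδ.le (by positivity)
      _ ≤ ((n:ℝ) + 2) * (4 * C * (p.toReal / (8 * C * (n + 2)))) := by
          apply mul_le_mul_of_nonneg_left _ (by positivity)
          apply mul_le_mul_of_nonneg_left hδbound (by positivity)
      _ = p.toReal / 2 := by field_simp; ring
      _ < p.toReal := by linarith
  have heK : ((K : ℝ≥0∞) + 1) = ENNReal.ofReal ((K:ℝ) + 1) := by
    rw [ENNReal.ofReal_add (by positivity) (by norm_num), ENNReal.ofReal_natCast,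
      ENNReal.ofReal_one]
  have hofReal : ((K : ℝ≥0∞) + 1) * ENNReal.ofReal (C * (2 * δ) ^ 2)
      = ENNReal.ofReal (((K:ℝ) + 1) * (C * (2 * δ) ^ 2)) := by
    rw [heK, ← ENNReal.ofReal_mul (by positivity)]
  have hfinal : P (Sn n) < p := by
    calc P (Sn n) ≤ ((K : ℝ≥0∞) + 1) * ENNReal.ofReal (C * (2 * δ) ^ 2) := hsum2
      _ = ENNReal.ofReal (((K:ℝ) + 1) * (C * (2 * δ) ^ 2)) := hofReal
      _ < ENNReal.ofReal p.toReal := (ENNReal.ofReal_lt_ofReal_iff hptoReal).2 hreal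
      _ = p := ENNReal.ofReal_toReal hpfin
  exact absurd hfinal (by rw [← hp]; exact lt_irrefl p)


section AuxPart3

open scoped Topology

variable {d : ℕ} {Ω : Type*} [MeasurableSpace Ω]

lemma aux_continuous_Ymat :
    Continuous fun q : (EuclideanSpace ℝ (Fin d)) × (EuclideanSpace ℝ (Fin d)) =>
      Ymat q.1 q.2 := by
  apply (PiLp.continuous_toLp 2 _).comp
  apply continuous_pi
  intro p
  exact (((PiLp.continuous_apply 2 _ p.1).comp continuous_fst).sub
      ((PiLp.continuous_apply 2 _ p.1).comp continuous_snd)).mul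
    (((PiLp.continuous_apply 2 _ p.2).comp continuous_fst).sub
      ((PiLp.continuous_apply 2 _ p.2).comp continuous_snd))

lemma aux_measurable_Ymat {X : Ω → EuclideanSpace ℝ (Fin d)} (hX : Measurable X)
    (h : EuclideanSpace ℝ (Fin d)) : Measurable fun ω => Ymat (X ω) h := by
  have : Continuous fun x : EuclideanSpace ℝ (Fin d) => Ymat x h :=
    aux_continuous_Ymat.comp (continuous_id.prodMk continuous_const)
  exact this.measurable.comp hX

lemma aux_point_null {P : Measure Ω} (Y : Ω → Mat d) (hY : Measurable Y) {C : ℝ}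
    (hC : 0 < C) {v : Mat d}
    (h2 : (∫⁻ ω, ((‖Y ω - v‖₊ : ℝ≥0∞) ^ 2)⁻¹ ∂P) ≤ ENNReal.ofReal C) :
    P {ω | Y ω = v} = 0 := by
  have hb : ∀ k : ℕ, P {ω | Y ω = v} ≤ ENNReal.ofReal (C * (1/((k:ℝ)+1))^2) := by
    intro k
    refine le_trans (measure_mono ?_) (markov_ball Y hY hC h2 (s := 1/((k:ℝ)+1))
      (by positivity))
    intro ω hω
    simp only [Set.mem_setOf_eq] at hω ⊢
    rw [hω]
    simp only [sub_self, norm_zero]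
    positivity
  have ht : Tendsto (fun k : ℕ => ENNReal.ofReal (C * (1/((k:ℝ)+1))^2)) atTop (𝓝 0) := by
    rw [← ENNReal.ofReal_zero]
    apply ENNReal.tendsto_ofReal
    have h1 : Tendsto (fun k : ℕ => 1/((k:ℝ)+1)) atTop (𝓝 0) :=
      tendsto_one_div_add_atTop_nhds_zero_nat
    have := (h1.mul h1).const_mul C
    simpa [pow_two] using this
  have := ge_of_tendsto' ht hb
  exact le_antisymm this zero_le

lemma aux_cs_eq {c w : Mat d} (hw : ‖w‖ = 1) (h : ‖c‖ ^ 2 = ⟪c, w⟫ ^ 2) :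
    c = ⟪c, w⟫ • w := by
  have h0 : ‖c - ⟪c, w⟫ • w‖ ^ 2 = 0 := by
    rw [norm_sub_sq_real, real_inner_smul_right, norm_smul, hw, mul_one,
      Real.norm_eq_abs]
    nlinarith [sq_abs ⟪c, w⟫]
  have : ‖c - ⟪c, w⟫ • w‖ = 0 := by
    have := pow_eq_zero_iff (n := 2) (by norm_num) |>.1 h0
    exact this
  rw [← sub_eq_zero]
  exact norm_eq_zero.1 this

/-- The truncated Hessian-form integrand. -/
def auxQ (X : Ω → EuclideanSpace ℝ (Fin d)) (Γ : Mat d)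
    (p : EuclideanSpace ℝ (Fin d) × ℝ × Mat d) (ω : Ω) : ℝ :=
  min (Qc (Ymat (X ω) p.1 - Γ - p.2.1 • p.2.2) p.2.2) 1

/-- The truncated Hessian-form integral. -/
def auxF (P : Measure Ω) (X : Ω → EuclideanSpace ℝ (Fin d)) (Γ : Mat d)
    (p : EuclideanSpace ℝ (Fin d) × ℝ × Mat d) : ℝ :=
  ∫ ω, auxQ X Γ p ω ∂P

lemma auxQ_nonneg {X : Ω → EuclideanSpace ℝ (Fin d)} {Γ : Mat d}
    {p : EuclideanSpace ℝ (Fin d) × ℝ × Mat d} (hw : ‖p.2.2‖ = 1) (ω : Ω) :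
    0 ≤ auxQ X Γ p ω :=
  le_min (Qc_nonneg hw) one_pos.le

lemma auxQ_le_one {X : Ω → EuclideanSpace ℝ (Fin d)} {Γ : Mat d}
    {p : EuclideanSpace ℝ (Fin d) × ℝ × Mat d} (ω : Ω) :
    auxQ X Γ p ω ≤ 1 := min_le_right _ _

lemma measurable_Qc_comp {X : Ω → EuclideanSpace ℝ (Fin d)} (hX : Measurable X)
    (Γ : Mat d) (h : EuclideanSpace ℝ (Fin d)) (s : ℝ) (w : Mat d) :
    Measurable fun ω => Qc (Ymat (X ω) h - Γ - s • w) w := by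
  have hc : Measurable fun ω => Ymat (X ω) h - Γ - s • w :=
    (aux_measurable_Ymat hX h).sub measurable_const |>.sub measurable_const
  have hinner : Measurable fun ω => ⟪Ymat (X ω) h - Γ - s • w, w⟫ :=
    ((continuous_id.inner (continuous_const : Continuous fun _ : Mat d => w))).measurable.comp hc
  exact ((hc.norm.pow_const 2).sub (hinner.pow_const 2)).div (hc.norm.pow_const 3)

lemma auxQ_measurable {X : Ω → EuclideanSpace ℝ (Fin d)} (hX : Measurable X)
    (Γ : Mat d) (p : EuclideanSpace ℝ (Fin d) × ℝ × Mat d) :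
    Measurable (auxQ X Γ p) :=
  (measurable_Qc_comp hX Γ p.1 p.2.1 p.2.2).min measurable_const

lemma auxQ_integrable {P : Measure Ω} [IsProbabilityMeasure P]
    {X : Ω → EuclideanSpace ℝ (Fin d)} (hX : Measurable X)
    (Γ : Mat d) {p : EuclideanSpace ℝ (Fin d) × ℝ × Mat d} (hw : ‖p.2.2‖ = 1) :
    Integrable (auxQ X Γ p) P := by
  refine Integrable.mono' (integrable_const 1) (auxQ_measurable hX Γ p).aestronglyMeasurable ?_
  filter_upwards with ω
  rw [Real.norm_eq_abs, abs_le]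
  exact ⟨by linarith [auxQ_nonneg hw (X := X) (Γ := Γ) ω], auxQ_le_one ω⟩

/-- Continuity of the truncated Hessian-form integral on the set where `w` is a unit
vector. -/
lemma auxF_contOn {P : Measure Ω} [IsProbabilityMeasure P]
    {X : Ω → EuclideanSpace ℝ (Fin d)} (hX : Measurable X) (Γ : Mat d) {C : ℝ} (hC : 0 < C)
    (h2 : ∀ (h : EuclideanSpace ℝ (Fin d)) (v : Mat d),
      (∫⁻ ω, ((‖Ymat (X ω) h - v‖₊ : ℝ≥0∞) ^ 2)⁻¹ ∂P) ≤ ENNReal.ofReal C) :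
    ContinuousOn (auxF P X Γ)
      {p : EuclideanSpace ℝ (Fin d) × ℝ × Mat d | ‖p.2.2‖ = 1} := by
  set Ksph : Set (EuclideanSpace ℝ (Fin d) × ℝ × Mat d) := {p | ‖p.2.2‖ = 1} with hKsph
  intro p₀ hp₀
  have hnull : P {ω | Ymat (X ω) p₀.1 = Γ + p₀.2.1 • p₀.2.2} = 0 :=
    aux_point_null _ (aux_measurable_Ymat hX p₀.1) hC (h2 p₀.1 _)
  have hae : ∀ᵐ ω ∂P, Ymat (X ω) p₀.1 ≠ Γ + p₀.2.1 • p₀.2.2 := by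
    rw [ae_iff]
    convert hnull using 2
    simp [not_not]
  refine tendsto_integral_filter_of_dominated_convergence (fun _ => (1:ℝ)) ?_ ?_
    (integrable_const 1) ?_
  · exact Filter.Eventually.of_forall fun p =>
      (auxQ_measurable hX Γ p).aestronglyMeasurable
  · have hmem : ∀ᶠ p in 𝓝[Ksph] p₀, p ∈ Ksph := eventually_mem_nhdsWithin
    filter_upwards [hmem] with p hp
    filter_upwards with ω
    rw [Real.norm_eq_abs, abs_le]
    exact ⟨by linarith [auxQ_nonneg (X := X) (Γ := Γ) hp ω], auxQ_le_one ω⟩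
  · filter_upwards [hae] with ω hω
    have hc0 : Ymat (X ω) p₀.1 - Γ - p₀.2.1 • p₀.2.2 ≠ 0 := by
      rw [sub_sub, sub_ne_zero]
      exact hω
    have hcont : ContinuousAt (fun p : EuclideanSpace ℝ (Fin d) × ℝ × Mat d =>
        auxQ X Γ p ω) p₀ := by
      have hc : Continuous fun p : EuclideanSpace ℝ (Fin d) × ℝ × Mat d =>
          Ymat (X ω) p.1 - Γ - p.2.1 • p.2.2 := by
        apply Continuous.sub
        · exact (aux_continuous_Ymat.comp
            ((continuous_const : Continuous fun _ => X ω).prodMk continuous_fst)).sub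
            continuous_const
        · exact (continuous_snd.fst).smul (continuous_snd.snd)
      have hQcont : ContinuousAt (fun p : EuclideanSpace ℝ (Fin d) × ℝ × Mat d =>
          Qc (Ymat (X ω) p.1 - Γ - p.2.1 • p.2.2) p.2.2) p₀ := by
        apply ContinuousAt.div
        · exact (((hc.norm.pow 2).sub
            ((hc.inner (continuous_snd.snd)).pow 2))).continuousAt
        · exact (hc.norm.pow 3).continuousAt
        · have : (0:ℝ) < ‖Ymat (X ω) p₀.1 - Γ - p₀.2.1 • p₀.2.2‖ := norm_pos_iff.2 hc0
          positivity
      exact (continuous_min.continuousAt).comp (hQcont.prodMk continuousAt_const)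
    exact (hcont.continuousWithinAt : ContinuousWithinAt _ Ksph p₀)

/-- Positivity of the truncated Hessian-form integral. -/
lemma auxF_pos {P : Measure Ω} [IsProbabilityMeasure P]
    {X : Ω → EuclideanSpace ℝ (Fin d)} (hX : Measurable X) (Γ : Mat d) {C : ℝ} (hC : 0 < C)
    (h2 : ∀ (h : EuclideanSpace ℝ (Fin d)) (v : Mat d),
      (∫⁻ ω, ((‖Ymat (X ω) h - v‖₊ : ℝ≥0∞) ^ 2)⁻¹ ∂P) ≤ ENNReal.ofReal C)
    (p : EuclideanSpace ℝ (Fin d) × ℝ × Mat d) (hw : ‖p.2.2‖ = 1) :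
    0 < auxF P X Γ p := by
  have hint : Integrable (auxQ X Γ p) P := auxQ_integrable hX Γ hw
  have h0 : 0 ≤ auxF P X Γ p := integral_nonneg (auxQ_nonneg hw)
  rcases h0.lt_or_eq with h | h
  · exact h
  exfalso
  have hzero : auxQ X Γ p =ᵐ[P] 0 :=
    (integral_eq_zero_iff_of_nonneg (auxQ_nonneg hw) hint).1 h.symm
  set L : Set Ω := {ω | ∃ t : ℝ, Ymat (X ω) p.1 = (Γ + p.2.1 • p.2.2) + t • p.2.2} with hL
  have hmemL : ∀ᵐ ω ∂P, ω ∈ L := by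
    filter_upwards [hzero] with ω hω
    have hQ0 : Qc (Ymat (X ω) p.1 - Γ - p.2.1 • p.2.2) p.2.2 = 0 := by
      have hmin : min (Qc (Ymat (X ω) p.1 - Γ - p.2.1 • p.2.2) p.2.2) 1 = 0 := hω
      rcases min_eq_iff.1 hmin with ⟨h1, _⟩ | ⟨h1, _⟩
      · exact h1
      · norm_num at h1
    set c : Mat d := Ymat (X ω) p.1 - Γ - p.2.1 • p.2.2 with hc
    rcases eq_or_ne c 0 with hc0 | hc0
    · refine ⟨0, ?_⟩
      rw [zero_smul, add_zero]
      have h00 : Ymat (X ω) p.1 - (Γ + p.2.1 • p.2.2) = 0 := by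
        rw [← sub_sub]; exact hc0
      exact sub_eq_zero.1 h00
    · have hden : ‖c‖ ^ 3 ≠ 0 := by
        have : (0:ℝ) < ‖c‖ := norm_pos_iff.2 hc0
        positivity
      have hnum : ‖c‖ ^ 2 - ⟪c, p.2.2⟫ ^ 2 = 0 := by
        rcases div_eq_zero_iff.1 hQ0 with h' | h'
        · exact h'
        · exact absurd h' hden
      have hcs := aux_cs_eq hw (by linarith [hnum] : ‖c‖ ^ 2 = ⟪c, p.2.2⟫ ^ 2)
      refine ⟨⟪c, p.2.2⟫, ?_⟩
      rw [← hcs, hc]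
      abel
  have hLnull : P L = 0 :=
    line_null _ (aux_measurable_Ymat hX p.1) hC (h2 p.1) _ _ hw
  have hLc : P {ω | ¬ ω ∈ L} = 0 := ae_iff.1 hmemL
  have : (1:ℝ≥0∞) ≤ 0 := by
    calc (1:ℝ≥0∞) = P Set.univ := (measure_univ).symm
      _ ≤ P L + P {ω | ¬ ω ∈ L} := by
          rw [show (Set.univ : Set Ω) = L ∪ {ω | ¬ ω ∈ L} by
            ext ω; by_cases hω : ω ∈ L <;> simp [hω]]
          exact measure_union_le _ _
      _ = 0 := by rw [hLnull, hLc, add_zero]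
  simp at this

end AuxPart3

/-- Local strong convexity of `G` around `Γ_m`, uniformly in the location parameter around
`m` (Corollary B.1 of the paper): there is `ε > 0` such that for every `A > 0` there is
`c_A > 0` with `⟪∇G_h(V) − ∇G_h(Γ_m), V − Γ_m⟫_F ≥ c_A ‖V − Γ_m‖_F²` whenever
`‖V − Γ_m‖_F ≤ A` and `‖h − m‖ ≤ ε`. -/
theorem stmt_14
    {d : ℕ} (hd : 1 ≤ d) (P : Measure Ω) [IsProbabilityMeasure P]
    (X : Ω → EuclideanSpace ℝ (Fin d)) (hX : Measurable X)
    -- `m` is the geometric median of `X`: the unique minimizer of `u ↦ E[‖X − u‖ − ‖X‖]`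
    (m : EuclideanSpace ℝ (Fin d))
    (hm : ∀ u, (∫ ω, (‖X ω - m‖ - ‖X ω‖) ∂P) ≤ ∫ ω, (‖X ω - u‖ - ‖X ω‖) ∂P)
    (hm_unique : ∀ u, (∀ v, (∫ ω, (‖X ω - u‖ - ‖X ω‖) ∂P) ≤
      ∫ ω, (‖X ω - v‖ - ‖X ω‖) ∂P) → u = m)
    -- `Γ` is the median covariation matrix: the unique minimizer of `G_m`
    (Γ : Mat d)
    (hΓ : ∀ V, Gfun P X m Γ ≤ Gfun P X m V)
    (hΓ_unique : ∀ V, (∀ W, Gfun P X m V ≤ Gfun P X m W) → V = Γ)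
    -- Assumption 1
    (hA1 : ∃ u₁ u₂ : EuclideanSpace ℝ (Fin d), ‖u₁‖ = 1 ∧ ‖u₂‖ = 1 ∧
      LinearIndependent ℝ ![u₁, u₂] ∧
      0 < evariance (fun ω => ⟪u₁, X ω⟫) P ∧ 0 < evariance (fun ω => ⟪u₂, X ω⟫) P)
    -- Assumption 2
    (hA2 : ∃ V₁ V₂ : Mat d, ‖V₁‖ = 1 ∧ ‖V₂‖ = 1 ∧ LinearIndependent ℝ ![V₁, V₂] ∧
      0 < evariance (fun ω => ⟪V₁, Ymat (X ω) m⟫) P ∧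
      0 < evariance (fun ω => ⟪V₂, Ymat (X ω) m⟫) P)
    -- Assumption 3(b)
    (C : ℝ) (hC : 0 < C)
    (hA3 : ∀ (h : EuclideanSpace ℝ (Fin d)) (V : Mat d),
      (∫⁻ ω, (‖Ymat (X ω) h - V‖₊ : ℝ≥0∞)⁻¹ ∂P) ≤ ENNReal.ofReal C ∧
      (∫⁻ ω, ((‖Ymat (X ω) h - V‖₊ : ℝ≥0∞) ^ 2)⁻¹ ∂P) ≤ ENNReal.ofReal C)
    :
    ∃ ε : ℝ, 0 < ε ∧ ∀ A : ℝ, 0 < A → ∃ cA : ℝ, 0 < cA ∧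
      ∀ (V : Mat d) (h : EuclideanSpace ℝ (Fin d)), ‖V - Γ‖ ≤ A → ‖h - m‖ ≤ ε →
        cA * ‖V - Γ‖ ^ 2 ≤ ⟪gradG P X h V - gradG P X h Γ, V - Γ⟫ := by
  classical
  have hinv2 : ∀ (h : EuclideanSpace ℝ (Fin d)) (v : Mat d),
      (∫⁻ ω, ((‖Ymat (X ω) h - v‖₊ : ℝ≥0∞) ^ 2)⁻¹ ∂P) ≤ ENNReal.ofReal C :=
    fun h v => (hA3 h v).2
  refine ⟨1, one_pos, ?_⟩
  intro A hA
  -- the compact parameter set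
  set Kset : Set (EuclideanSpace ℝ (Fin d) × ℝ × Mat d) :=
    (Metric.closedBall m 1) ×ˢ ((Set.Icc 0 A) ×ˢ (Metric.sphere (0 : Mat d) 1)) with hKset
  have hKcomp : IsCompact Kset :=
    (isCompact_closedBall m 1).prod ((isCompact_Icc).prod (isCompact_sphere 0 1))
  have hdpos : 0 < d := hd
  have hMatNontrivial : Nontrivial (Mat d) := by
    have : ‖EuclideanSpace.single ((⟨0, hdpos⟩, ⟨0, hdpos⟩) : Fin d × Fin d) (1:ℝ)‖ = 1 := by
      rw [EuclideanSpace.norm_single]; norm_num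
    refine ⟨⟨EuclideanSpace.single ((⟨0, hdpos⟩, ⟨0, hdpos⟩) : Fin d × Fin d) (1:ℝ), 0, ?_⟩⟩
    intro h0
    rw [h0, norm_zero] at this
    norm_num at this
  obtain ⟨w₀, hw₀⟩ : ∃ w₀ : Mat d, w₀ ∈ Metric.sphere (0 : Mat d) 1 :=
    NormedSpace.sphere_nonempty.2 (by norm_num)
  have hKne : Kset.Nonempty := by
    refine ⟨(m, 0, w₀), ?_⟩
    refine ⟨Metric.mem_closedBall_self (by norm_num), ⟨⟨le_rfl, hA.le⟩, hw₀⟩⟩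
  have hKsub : Kset ⊆ {p : EuclideanSpace ℝ (Fin d) × ℝ × Mat d | ‖p.2.2‖ = 1} := by
    rintro ⟨h, s, w⟩ ⟨_, _, hw⟩
    simpa [mem_sphere_zero_iff_norm] using hw
  have hcontK : ContinuousOn (auxF P X Γ) Kset :=
    (auxF_contOn hX Γ hC hinv2).mono hKsub
  obtain ⟨pstar, hpstarK, hmin⟩ := hKcomp.exists_isMinOn hKne hcontK
  have hwstar : ‖pstar.2.2‖ = 1 := hKsub hpstarK
  set cA : ℝ := auxF P X Γ pstar with hcA
  have hcApos : 0 < cA := auxF_pos hX Γ hC hinv2 pstar hwstar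
  refine ⟨cA, hcApos, ?_⟩
  intro V h hVA hhm
  rcases eq_or_ne V Γ with rfl | hVΓ
  · simp
  -- setup
  set u : Mat d := V - Γ with hu
  have hu0 : u ≠ 0 := sub_ne_zero.2 hVΓ
  set r : ℝ := ‖u‖ with hr
  have hrpos : 0 < r := norm_pos_iff.2 hu0
  have hrA : r ≤ A := hVA
  set w : Mat d := r⁻¹ • u with hw
  have hwnorm : ‖w‖ = 1 := norm_smul_inv_norm hu0
  have huw : r • w = u := by
    rw [hw, smul_smul, mul_inv_cancel₀ hrpos.ne', one_smul]
  set Yh : Ω → Mat d := fun ω => Ymat (X ω) h with hYh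
  have hYhm : Measurable Yh := aux_measurable_Ymat hX h
  -- the two gradient integrands
  set g1 : Ω → Mat d := fun ω => ‖Yh ω - Γ‖⁻¹ • (Yh ω - Γ) with hg1
  set g2 : Ω → Mat d := fun ω => ‖Yh ω - V‖⁻¹ • (Yh ω - V) with hg2
  have hnorm_le : ∀ (x : Mat d), ‖‖x‖⁻¹ • x‖ ≤ 1 := by
    intro x
    rcases eq_or_ne x 0 with rfl | hx
    · simp
    · rw [norm_smul, norm_inv, norm_norm, inv_mul_cancel₀ (norm_ne_zero_iff.2 hx)]
  have hg1m : Measurable g1 := ((hYhm.sub measurable_const).norm.inv).smul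
    (hYhm.sub measurable_const)
  have hg2m : Measurable g2 := ((hYhm.sub measurable_const).norm.inv).smul
    (hYhm.sub measurable_const)
  have hg1i : Integrable g1 P := by
    refine Integrable.mono' (integrable_const 1) hg1m.aestronglyMeasurable ?_
    filter_upwards with ω
    exact hnorm_le _
  have hg2i : Integrable g2 P := by
    refine Integrable.mono' (integrable_const 1) hg2m.aestronglyMeasurable ?_
    filter_upwards with ω
    exact hnorm_le _
  -- rewrite the left-hand side as an integral
  set Φ : Ω → ℝ := fun ω => ⟪g1 ω - g2 ω, u⟫ with hΦ
  have hΦm : Measurable Φ :=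
    (((continuous_id.inner (continuous_const : Continuous fun _ : Mat d => u))).measurable).comp
      (hg1m.sub hg2m)
  have hΦi : Integrable Φ P := by
    refine Integrable.mono' (integrable_const (2 * ‖u‖)) hΦm.aestronglyMeasurable ?_
    filter_upwards with ω
    rw [hΦ, Real.norm_eq_abs]
    calc |⟪g1 ω - g2 ω, u⟫| ≤ ‖g1 ω - g2 ω‖ * ‖u‖ := abs_real_inner_le_norm _ _
      _ ≤ 2 * ‖u‖ := by
          apply mul_le_mul_of_nonneg_right _ (norm_nonneg _)
          calc ‖g1 ω - g2 ω‖ ≤ ‖g1 ω‖ + ‖g2 ω‖ := norm_sub_le _ _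
            _ ≤ 1 + 1 := add_le_add (hnorm_le _) (hnorm_le _)
            _ = 2 := by norm_num
  have hLHS : ⟪gradG P X h V - gradG P X h Γ, u⟫ = ∫ ω, Φ ω ∂P := by
    have hdiff : gradG P X h V - gradG P X h Γ = ∫ ω, (g1 ω - g2 ω) ∂P := by
      rw [gradG, gradG, integral_sub hg1i hg2i]
      abel
    have hsubint : Integrable (fun ω => g1 ω - g2 ω) P := hg1i.sub hg2i
    have hii := integral_inner (𝕜 := ℝ) hsubint u
    rw [hdiff, real_inner_comm, ← hii]
    apply integral_congr_ae
    filter_upwards with ω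
    exact real_inner_comm (g1 ω - g2 ω) u
  -- the a.e. good set
  have hgood : ∀ᵐ ω ∂P, ∀ s ∈ Set.Icc (0:ℝ) r, Yh ω - Γ - s • w ≠ 0 := by
    have hLnull : P {ω | ∃ t : ℝ, Ymat (X ω) h = Γ + t • w} = 0 :=
      line_null _ hYhm hC (hinv2 h) Γ w hwnorm
    rw [ae_iff]
    apply measure_mono_null _ hLnull
    intro ω hω
    simp only [Set.mem_setOf_eq, not_forall, Classical.not_imp, not_not] at hω
    obtain ⟨s, _hs, hc⟩ := hω
    refine ⟨s, ?_⟩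
    have h00 : Ymat (X ω) h - (Γ + s • w) = 0 := by
      rw [← sub_sub]; exact hc
    exact sub_eq_zero.1 h00
  -- the inner interval integrand
  set QQ : Ω → ℝ → ℝ := fun ω s => min (Qc (Yh ω - Γ - s • w) w) 1 with hQQ
  set Gfn : Ω → ℝ := fun ω => ∫ s in (0:ℝ)..r, QQ ω s with hGfn
  -- pointwise comparison
  have hstep : ∀ᵐ ω ∂P, r * Gfn ω ≤ Φ ω := by
    filter_upwards [hgood] with ω hωg
    have hcont : ContinuousOn (fun s : ℝ => Qc (Yh ω - Γ - s • w) w)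
        (Set.uIcc (0:ℝ) r) := by
      rw [Set.uIcc_of_le hrpos.le]
      intro s hs
      have hc := hωg s hs
      have hcn : (0:ℝ) < ‖Yh ω - Γ - s • w‖ := norm_pos_iff.2 hc
      have h1 : ContinuousAt (fun s : ℝ => Yh ω - Γ - s • w) s := by
        exact ((continuousAt_const).sub ((continuousAt_id).smul continuousAt_const))
      apply ContinuousAt.continuousWithinAt
      apply ContinuousAt.div
      · exact ((h1.norm.pow 2).sub ((h1.inner continuousAt_const).pow 2))
      · exact h1.norm.pow 3
      · positivity
    have hintQ : IntervalIntegrable (fun s : ℝ => Qc (Yh ω - Γ - s • w) w) volume 0 r :=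
      hcont.intervalIntegrable
    have hintQm : IntervalIntegrable (fun s : ℝ => QQ ω s) volume 0 r :=
      (continuous_min.comp_continuousOn (hcont.prodMk continuousOn_const)).intervalIntegrable
    have hftc := ftc_key hwnorm hrpos.le (fun s hs => hωg s hs)
      (b := Yh ω - Γ) (w := w)
    have hΦeq : Φ ω = r * ∫ s in (0:ℝ)..r, Qc (Yh ω - Γ - s • w) w := by
      rw [← hftc]
      have hVeq : Yh ω - V = Yh ω - Γ - r • w := by
        rw [huw, hu]; abel
      show ⟪g1 ω - g2 ω, u⟫ = _
      rw [show g1 ω = ‖Yh ω - Γ‖⁻¹ • (Yh ω - Γ) from rfl,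
        show g2 ω = ‖Yh ω - V‖⁻¹ • (Yh ω - V) from rfl, hVeq]
      rw [inner_sub_left, real_inner_smul_left, real_inner_smul_left]
      have hbu : ⟪Yh ω - Γ, u⟫ = r * ⟪Yh ω - Γ, w⟫ := by
        rw [← huw, real_inner_smul_right]
      have hau : ⟪Yh ω - Γ - r • w, u⟫ = r * ⟪Yh ω - Γ - r • w, w⟫ := by
        rw [← huw, real_inner_smul_right]
      rw [hbu, hau]
      ring
    rw [hΦeq]
    apply mul_le_mul_of_nonneg_left _ hrpos.le
    apply intervalIntegral.integral_mono_on hrpos.le hintQm hintQ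
    intro s _
    exact min_le_left _ _
  -- measurability of the inner integral
  have hQQjoint : Measurable fun q : Ω × ℝ => QQ q.1 q.2 := by
    have hc : Measurable fun q : Ω × ℝ => Yh q.1 - Γ - q.2 • w := by
      apply Measurable.sub
      · exact (hYhm.comp measurable_fst).sub measurable_const
      · exact measurable_snd.smul measurable_const
    have hinner : Measurable fun q : Ω × ℝ => ⟪Yh q.1 - Γ - q.2 • w, w⟫ :=
      ((continuous_id.inner (continuous_const : Continuous fun _ : Mat d => w))).measurable.comp hc
    exact (((hc.norm.pow_const 2).sub (hinner.pow_const 2)).div (hc.norm.pow_const 3)).min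
      measurable_const
  haveI hfinIoc : IsFiniteMeasure (volume.restrict (Set.Ioc (0:ℝ) r)) := by
    constructor
    rw [Measure.restrict_apply MeasurableSet.univ, Set.univ_inter, Real.volume_Ioc]
    exact ENNReal.ofReal_lt_top
  have hGm : Measurable Gfn := by
    have : Gfn = fun ω => ∫ s, QQ ω s ∂(volume.restrict (Set.Ioc (0:ℝ) r)) := by
      funext ω
      rw [hGfn]
      exact intervalIntegral.integral_of_le hrpos.le
    rw [this]
    exact (StronglyMeasurable.integral_prod_right'
      (hQQjoint.stronglyMeasurable)).measurable
  have hGbound : ∀ ω, ‖Gfn ω‖ ≤ r := by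
    intro ω
    have := intervalIntegral.norm_integral_le_of_norm_le_const (C := 1)
      (f := fun s => QQ ω s) (a := 0) (b := r) ?_
    · simpa [abs_of_nonneg hrpos.le] using this
    · intro s _
      rw [Real.norm_eq_abs, abs_le]
      constructor
      · have := Qc_nonneg (c := Yh ω - Γ - s • w) hwnorm
        have hm : (0:ℝ) ≤ QQ ω s := le_min this one_pos.le
        linarith
      · exact min_le_right _ _
  have hGi : Integrable Gfn P := by
    refine Integrable.mono' (integrable_const r) hGm.aestronglyMeasurable ?_
    filter_upwards with ω
    exact hGbound ω
  -- Fubini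
  have hswap : ∫ ω, Gfn ω ∂P
      = ∫ s in Set.Ioc (0:ℝ) r, (auxF P X Γ (h, s, w)) ∂volume := by
    have h1 : ∫ ω, Gfn ω ∂P
        = ∫ ω, ∫ s, QQ ω s ∂(volume.restrict (Set.Ioc (0:ℝ) r)) ∂P := by
      apply integral_congr_ae
      filter_upwards with ω
      rw [hGfn]
      exact intervalIntegral.integral_of_le hrpos.le
    rw [h1]
    have hunc : Integrable (Function.uncurry QQ)
        (P.prod (volume.restrict (Set.Ioc (0:ℝ) r))) := by
      refine Integrable.mono' (integrable_const 1)
        (hQQjoint.aestronglyMeasurable) ?_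
      filter_upwards with q
      rw [show Function.uncurry QQ q = QQ q.1 q.2 from rfl, Real.norm_eq_abs, abs_le]
      constructor
      · have := Qc_nonneg (c := Yh q.1 - Γ - q.2 • w) hwnorm
        have hm0 : (0:ℝ) ≤ QQ q.1 q.2 := le_min this one_pos.le
        linarith
      · exact min_le_right _ _
    rw [MeasureTheory.integral_integral_swap hunc]
    apply integral_congr_ae
    filter_upwards with s
    rfl
  -- lower bound for the inner integral
  have hFlb : ∀ s ∈ Set.Ioc (0:ℝ) r, cA ≤ auxF P X Γ (h, s, w) := by
    intro s hs
    have hmem : ((h, s, w) : EuclideanSpace ℝ (Fin d) × ℝ × Mat d) ∈ Kset := by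
      refine ⟨?_, ⟨?_, ?_⟩⟩
      · exact Metric.mem_closedBall.2 (by rwa [dist_eq_norm])
      · exact ⟨hs.1.le, le_trans hs.2 hrA⟩
      · rw [mem_sphere_zero_iff_norm]; exact hwnorm
    exact isMinOn_iff.1 hmin _ hmem
  have hFcont : ContinuousOn (fun s : ℝ => auxF P X Γ (h, s, w)) (Set.Icc 0 r) := by
    have hmapsto : ∀ s ∈ Set.Icc (0:ℝ) r,
        ((h, s, w) : EuclideanSpace ℝ (Fin d) × ℝ × Mat d) ∈ Kset := by
      intro s hs
      refine ⟨Metric.mem_closedBall.2 (by rwa [dist_eq_norm]),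
        ⟨⟨hs.1, le_trans hs.2 hrA⟩, by rw [mem_sphere_zero_iff_norm]; exact hwnorm⟩⟩
    have hg : Continuous fun s : ℝ => ((h, s, w) : EuclideanSpace ℝ (Fin d) × ℝ × Mat d) :=
      continuous_const.prodMk (continuous_id.prodMk continuous_const)
    exact hcontK.comp hg.continuousOn hmapsto
  have hFint : IntegrableOn (fun s : ℝ => auxF P X Γ (h, s, w)) (Set.Ioc 0 r) volume :=
    (hFcont.integrableOn_compact isCompact_Icc).mono_set Set.Ioc_subset_Icc_self
  have hIoclb : cA * r ≤ ∫ s in Set.Ioc (0:ℝ) r, (auxF P X Γ (h, s, w)) ∂volume := by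
    have hconstint : IntegrableOn (fun _ : ℝ => cA) (Set.Ioc 0 r) volume :=
      integrableOn_const (by rw [Real.volume_Ioc]; exact ENNReal.ofReal_ne_top)
    have := setIntegral_mono_on hconstint hFint measurableSet_Ioc
      (fun s hs => hFlb s hs)
    calc cA * r = ∫ _ in Set.Ioc (0:ℝ) r, cA ∂volume := by
          rw [setIntegral_const, Real.volume_real_Ioc_of_le hrpos.le, sub_zero,
            smul_eq_mul, mul_comm]
      _ ≤ _ := this
  -- put everything together
  have hrGfn : r * ∫ ω, Gfn ω ∂P ≤ ∫ ω, Φ ω ∂P := by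
    have h1 : ∫ ω, r * Gfn ω ∂P ≤ ∫ ω, Φ ω ∂P :=
      integral_mono_ae (hGi.const_mul r) hΦi hstep
    calc r * ∫ ω, Gfn ω ∂P = ∫ ω, r * Gfn ω ∂P := by
          rw [← smul_eq_mul, ← integral_smul]
          simp [smul_eq_mul]
      _ ≤ ∫ ω, Φ ω ∂P := h1
  have hfinal : cA * r ^ 2 ≤ ⟪gradG P X h V - gradG P X h Γ, u⟫ := by
    rw [hLHS]
    calc cA * r ^ 2 = r * (cA * r) := by ring
      _ ≤ r * ∫ s in Set.Ioc (0:ℝ) r, (auxF P X Γ (h, s, w)) ∂volume := by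
          apply mul_le_mul_of_nonneg_left hIoclb hrpos.le
      _ = r * ∫ ω, Gfn ω ∂P := by rw [hswap]
      _ ≤ ∫ ω, Φ ω ∂P := hrGfn
  exact hfinal
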